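/- arXiv:2310.15457 — 5 statements merged into one kernel-verified Lean document; each statement's English description precedes it below -/
import Mathlib

section
/- Let H be a real inner product space, N ≥ 1, α : Fin N → ℝ with m := Σ_{i=1}^N α_i² > 0, and let δ > 0, λ > 0. Let p : Fin N → H and let a ≥ 0 be a real number. Write x := ‖Σ_{i=1}^N α_i • p_i‖. If δ · Σ_{i=1}^N ‖p_i‖² + x²/λ ≤ (a/λ) · x, then x ≤ (m/λ)/(δ + m/λ) · a = (m/(λδ + m)) · a. -/
open Finset

/-- The key contraction estimate (4.9) in the convergence proof of the
iteratively decoupled algorithm (Theorem 4.1): writing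
`x = ‖Σ α_i • p_i‖`, the inequality
`δ Σ ‖p_i‖² + x²/λ ≤ (a/λ) x` implies `x ≤ (m/(λδ + m)) a` where
`m = Σ α_i²`. -/
theorem contraction_estimate_total_pressure
    {H : Type*} [NormedAddCommGroup H] [InnerProductSpace ℝ H]
    (N : ℕ) (hN : 1 ≤ N) (α : Fin N → ℝ)
    (m : ℝ) (hm : m = ∑ i : Fin N, (α i) ^ 2) (hm_pos : 0 < m)
    (δ lam : ℝ) (hδ : 0 < δ) (hlam : 0 < lam)
    (p : Fin N → H) (a : ℝ) (ha : 0 ≤ a)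
    (x : ℝ) (hx : x = ‖∑ i : Fin N, α i • p i‖)
    (hineq : δ * (∑ i : Fin N, ‖p i‖ ^ 2) + x ^ 2 / lam ≤ (a / lam) * x) :
    x ≤ (m / lam) / (δ + m / lam) * a := by
  set S : ℝ := ∑ i : Fin N, ‖p i‖ ^ 2 with hS
  have hxnn : 0 ≤ x := hx ▸ norm_nonneg _
  have hSnn : 0 ≤ S := Finset.sum_nonneg fun i _ => sq_nonneg _
  -- Cauchy–Schwarz: x² ≤ m * S
  have hcs : x ^ 2 ≤ m * S := by
    have h1 : x ≤ ∑ i : Fin N, |α i| * ‖p i‖ := by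
      rw [hx]
      refine (norm_sum_le _ _).trans ?_
      refine Finset.sum_le_sum fun i _ => ?_
      rw [norm_smul, Real.norm_eq_abs]
    have h2 : (∑ i : Fin N, |α i| * ‖p i‖) ^ 2 ≤
        (∑ i : Fin N, |α i| ^ 2) * ∑ i : Fin N, ‖p i‖ ^ 2 :=
      Finset.sum_mul_sq_le_sq_mul_sq _ _ _
    have h3 : (∑ i : Fin N, |α i| ^ 2) = m := by
      rw [hm]; exact Finset.sum_congr rfl fun i _ => sq_abs _
    calc x ^ 2 ≤ (∑ i : Fin N, |α i| * ‖p i‖) ^ 2 := by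
          apply pow_le_pow_left₀ hxnn h1
      _ ≤ m * S := by rw [← h3]; exact h2
  -- clear denominators
  rcases eq_or_lt_of_le hxnn with h0 | hxpos
  · rw [← h0]
    positivity
  · have hgoal : m / lam / (δ + m / lam) * a = m * a / (lam * δ + m) := by
      field_simp
    rw [hgoal, le_div_iff₀ (by positivity)]
    have key : lam * δ * S + x ^ 2 ≤ a * x := by
      have := mul_le_mul_of_nonneg_left hineq hlam.le
      field_simp at this
      nlinarith [this]
    nlinarith [mul_le_mul_of_nonneg_left hcs (le_of_lt hδ), hxpos, key,
      mul_pos hm_pos hxpos]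
end

section
/- Let H be a real inner product space, N ≥ 1, α : Fin N → ℝ with m := Σ_{i=1}^N α_i² > 0, and let δ > 0, λ > 0. Let p : Fin N → H and let a ≥ 0 be a real number. Write x := ‖Σ_{i=1}^N α_i • p_i‖. If δ · Σ_{i=1}^N ‖p_i‖² + x²/λ ≤ (a/λ) · x, then (Σ_{i=1}^N ‖p_i‖²)^{1/2} ≤ (m/(λδ(λδ + m)))^{1/2} · a. -/
open Finset

/-- Estimate (4.13) in the convergence proof of the iteratively decoupled
algorithm (Theorem 4.1): writing `x = ‖Σ α_i • p_i‖`, the inequality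
`δ Σ ‖p_i‖² + x²/λ ≤ (a/λ) x` implies
`(Σ ‖p_i‖²)^{1/2} ≤ (m/(λδ(λδ + m)))^{1/2} a` where `m = Σ α_i²`. -/
theorem pressure_error_l2_estimate
    {H : Type*} [NormedAddCommGroup H] [InnerProductSpace ℝ H]
    (N : ℕ) (hN : 1 ≤ N) (α : Fin N → ℝ)
    (m : ℝ) (hm : m = ∑ i : Fin N, (α i) ^ 2) (hm_pos : 0 < m)
    (δ lam : ℝ) (hδ : 0 < δ) (hlam : 0 < lam)
    (p : Fin N → H) (a : ℝ) (ha : 0 ≤ a)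
    (x : ℝ) (hx : x = ‖∑ i : Fin N, α i • p i‖)
    (hineq : δ * (∑ i : Fin N, ‖p i‖ ^ 2) + x ^ 2 / lam ≤ (a / lam) * x) :
    Real.sqrt (∑ i : Fin N, ‖p i‖ ^ 2) ≤
      Real.sqrt (m / (lam * δ * (lam * δ + m))) * a := by
  set S : ℝ := ∑ i : Fin N, ‖p i‖ ^ 2 with hS
  have hS0 : 0 ≤ S := Finset.sum_nonneg fun i _ => sq_nonneg _
  have hx0 : 0 ≤ x := hx ▸ norm_nonneg _
  -- Cauchy-Schwarz: x² ≤ m * S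
  have hCS : x ^ 2 ≤ m * S := by
    have h1 : x ≤ ∑ i : Fin N, |α i| * ‖p i‖ := by
      rw [hx]
      refine (norm_sum_le _ _).trans (le_of_eq ?_)
      exact Finset.sum_congr rfl fun i _ => by rw [norm_smul, Real.norm_eq_abs]
    have h2 : (∑ i : Fin N, |α i| * ‖p i‖) ^ 2 ≤
        (∑ i : Fin N, |α i| ^ 2) * ∑ i : Fin N, ‖p i‖ ^ 2 :=
      Finset.sum_mul_sq_le_sq_mul_sq _ _ _
    have h3 : (∑ i : Fin N, |α i| ^ 2) = m := by
      rw [hm]; exact Finset.sum_congr rfl fun i _ => sq_abs _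
    have hnn : 0 ≤ ∑ i : Fin N, |α i| * ‖p i‖ :=
      Finset.sum_nonneg fun i _ => mul_nonneg (abs_nonneg _) (norm_nonneg _)
    calc x ^ 2 ≤ (∑ i : Fin N, |α i| * ‖p i‖) ^ 2 := by
          exact pow_le_pow_left₀ hx0 h1 2
      _ ≤ m * S := by rw [← h3]; exact h2
  -- multiply hineq by lam
  have h1 : lam * δ * S + x ^ 2 ≤ a * x := by
    have := mul_le_mul_of_nonneg_left hineq (le_of_lt hlam)
    field_simp at this
    nlinarith [this]
  have hD : 0 < lam * δ * (lam * δ + m) := by positivity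
  have hkey : S ≤ m * a ^ 2 / (lam * δ * (lam * δ + m)) := by
    rw [le_div_iff₀ hD]
    rcases eq_or_lt_of_le hx0 with hxe | hxp
    · -- x = 0
      have hSle : S ≤ 0 := by
        have hld : 0 < lam * δ := mul_pos hlam hδ
        have h1' : lam * δ * S ≤ lam * δ * 0 := by nlinarith [h1]
        exact le_of_mul_le_mul_left h1' hld
      nlinarith [mul_nonpos_of_nonpos_of_nonneg hSle hD.le,
        mul_nonneg hm_pos.le (sq_nonneg a)]
    · -- x > 0 : (lam*δ + m) * x ≤ m * a
      have h3 : (lam * δ + m) * x ≤ m * a := by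
        have h4 : (lam * δ + m) * x ^ 2 ≤ m * a * x := by nlinarith [mul_le_mul_of_nonneg_left hCS (mul_pos hlam hδ).le, mul_le_mul_of_nonneg_left h1 hm_pos.le]
        exact le_of_mul_le_mul_right (by nlinarith [h4]) hxp
      nlinarith [mul_le_mul_of_nonneg_left h3 ha, h1, sq_nonneg x,
        mul_nonneg hS0 hm_pos.le, mul_pos hlam hδ]
  calc Real.sqrt S ≤ Real.sqrt (m * a ^ 2 / (lam * δ * (lam * δ + m))) :=
        Real.sqrt_le_sqrt hkey
    _ = Real.sqrt (m / (lam * δ * (lam * δ + m))) * a := by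
        rw [show m * a ^ 2 / (lam * δ * (lam * δ + m)) =
          m / (lam * δ * (lam * δ + m)) * a ^ 2 by ring,
          Real.sqrt_mul (by positivity), Real.sqrt_sq ha]
end

section
/- Let H be a real inner product space, N ≥ 1, α : Fin N → ℝ with m := Σ_{i=1}^N α_i² > 0, and let δ > 0, λ > 0, Δt > 0, ζ > 0. Let p : Fin N → H, and let a ≥ 0 and g ≥ 0 be real numbers. Write x := ‖Σ_{i=1}^N α_i • p_i‖. If δ · Σ_{i=1}^N ‖p_i‖² + x²/λ ≤ (a/λ) · x and Δt · ζ · g² ≤ (a/λ) · x, then g ≤ ((m/λ)/((λδ + m) · Δt · ζ))^{1/2} · a. -/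
open Finset

set_option maxHeartbeats 1000000 in
/-- The pressure-gradient estimate (4.14) in the convergence proof of the
iteratively decoupled algorithm (Theorem 4.1): writing `x = ‖Σ α_i • p_i‖`,
the two inequalities `δ Σ ‖p_i‖² + x²/λ ≤ (a/λ) x` and `Δt ζ g² ≤ (a/λ) x`
imply `g ≤ ((m/λ)/((λδ + m) Δt ζ))^{1/2} a`, where `m = Σ α_i²`. -/
theorem pressure_gradient_estimate
    {H : Type*} [NormedAddCommGroup H] [InnerProductSpace ℝ H]
    (N : ℕ) (hN : 1 ≤ N) (α : Fin N → ℝ)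
    (m : ℝ) (hm : m = ∑ i : Fin N, (α i) ^ 2) (hm_pos : 0 < m)
    (δ lam Δt ζ : ℝ) (hδ : 0 < δ) (hlam : 0 < lam) (hΔt : 0 < Δt) (hζ : 0 < ζ)
    (p : Fin N → H) (a g : ℝ) (ha : 0 ≤ a) (hg : 0 ≤ g)
    (x : ℝ) (hx : x = ‖∑ i : Fin N, α i • p i‖)
    (hineq1 : δ * (∑ i : Fin N, ‖p i‖ ^ 2) + x ^ 2 / lam ≤ (a / lam) * x)
    (hineq2 : Δt * ζ * g ^ 2 ≤ (a / lam) * x) :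
    g ≤ Real.sqrt ((m / lam) / ((lam * δ + m) * Δt * ζ)) * a := by
  set S : ℝ := ∑ i : Fin N, ‖p i‖ ^ 2 with hS
  have hxnn : 0 ≤ x := hx ▸ norm_nonneg _
  -- Cauchy–Schwarz: x² ≤ m * S
  have h1 : x ≤ ∑ i : Fin N, |α i| * ‖p i‖ := by
    rw [hx]
    refine (norm_sum_le _ _).trans ?_
    apply le_of_eq
    simp [norm_smul]
  have h2 : (∑ i : Fin N, |α i| * ‖p i‖) ^ 2 ≤ m * S := by
    rw [hm, hS]
    have key := Finset.sum_mul_sq_le_sq_mul_sq Finset.univ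
      (fun i => |α i|) (fun i => ‖p i‖)
    calc (∑ i : Fin N, |α i| * ‖p i‖) ^ 2
        ≤ (∑ i : Fin N, |α i| ^ 2) * (∑ i : Fin N, ‖p i‖ ^ 2) := key
      _ = (∑ i : Fin N, (α i) ^ 2) * (∑ i : Fin N, ‖p i‖ ^ 2) := by
          simp [sq_abs]
  have hx2 : x ^ 2 ≤ m * S := le_trans (by nlinarith) h2
  set c : ℝ := (m / lam) / ((lam * δ + m) * Δt * ζ) with hc
  have hcnn : 0 ≤ c := by positivity
  have hrw : Real.sqrt c * a = Real.sqrt (c * a ^ 2) := by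
    rw [Real.sqrt_mul hcnn, Real.sqrt_sq ha]
  rw [hrw]
  rw [Real.le_sqrt hg (by positivity)]
  -- need g² ≤ c * a²
  rcases eq_or_lt_of_le hxnn with h0 | hxpos
  · have : Δt * ζ * g ^ 2 ≤ 0 := by rw [← h0] at hineq2; linarith [hineq2]
    have hg0 : g ^ 2 ≤ 0 := by nlinarith [mul_pos hΔt hζ]
    have : g ^ 2 = 0 := le_antisymm hg0 (by positivity)
    rw [this]; positivity
  · -- x > 0 : from hineq1 and hx2, x ≤ a*m/(lam*δ+m)
    have hSx : x ^ 2 / m ≤ S := by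
      rw [div_le_iff₀ hm_pos]; nlinarith
    have hineq1' : δ * S * lam + x ^ 2 ≤ a * x := by
      have h := mul_le_mul_of_nonneg_right hineq1 hlam.le
      have e1 : (δ * S + x ^ 2 / lam) * lam = δ * S * lam + x ^ 2 := by
        field_simp
      have e2 : (a / lam * x) * lam = a * x := by field_simp
      rw [e1, e2] at h
      exact h
    have hkey : x * (lam * δ + m) ≤ a * m := by
      nlinarith [hxpos, mul_le_mul_of_nonneg_right hx2 (mul_pos hlam hδ).le,
        mul_le_mul_of_nonneg_right hineq1' hm_pos.le]
    have hineq2' : Δt * ζ * g ^ 2 * lam ≤ a * x := by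
      rw [div_mul_eq_mul_div, le_div_iff₀ hlam] at hineq2; linarith
    have hbound : Δt * ζ * g ^ 2 * (lam * (lam * δ + m)) ≤ a ^ 2 * m := by
      have hpos : (0:ℝ) ≤ lam * δ + m := by positivity
      nlinarith [mul_le_mul_of_nonneg_right hineq2' hpos,
        mul_le_mul_of_nonneg_left hkey ha]
    clear_value S c
    clear hx hm hS hrw h1 h2 hSx hx2 hineq1 hineq1' hineq2 hineq2' hkey hxpos hxnn
    clear! H N
    have hden : 0 < (lam * δ + m) * Δt * ζ := by positivity
    have hD : (0:ℝ) < lam * ((lam * δ + m) * Δt * ζ) := mul_pos hlam hden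
    have key : g ^ 2 * (lam * ((lam * δ + m) * Δt * ζ)) ≤ m * a ^ 2 := by
      nlinarith [hbound]
    calc g ^ 2 = g ^ 2 * (lam * ((lam * δ + m) * Δt * ζ)) / (lam * ((lam * δ + m) * Δt * ζ)) := by
          field_simp
      _ ≤ m * a ^ 2 / (lam * ((lam * δ + m) * Δt * ζ)) := by gcongr
      _ = c * a ^ 2 := by rw [hc]; field_simp
end

section
/- Let H be a real inner product space, N ≥ 1, α : Fin N → ℝ with m := Σ_{i=1}^N α_i² > 0, and let δ > 0, λ > 0, μ > 0. Set C* := m/(λδ + m), so 0 < C* < 1. Let a : ℕ → ℝ and E : ℕ → ℝ be sequences of nonnegative reals and p : ℕ → (Fin N → H), and for each k write x_k := ‖Σ_{i=1}^N α_i • p_k i‖. Assume for every k ≥ 1: (H1) δ · Σ_{i=1}^N ‖p_k i‖² + x_k²/λ ≤ (a_{k−1}/λ) · x_k, and (H2) 2μ · E_k² + a_k²/λ ≤ (x_k/λ) · a_k. Then for every k ≥ 1 one has a_k ≤ x_k ≤ C* · a_{k−1}, hence a_k ≤ (C*)^k · a_0; consequently a_k → 0, x_k → 0, E_k → 0, and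 Σ_{i=1}^N ‖p_k i‖² → 0 as k → ∞. -/
open Finset Filter Topology

/-- Abstract content of Theorem 4.1 of the paper: under the error relations
(H1) and (H2) of the iteratively decoupled algorithm, writing
`x_k = ‖Σ α_i • p_k i‖` and `C* = m/(λδ + m)` (with `0 < C* < 1`), one has
`a_k ≤ x_k ≤ C* a_{k−1}` for all `k ≥ 1`, hence `a_k ≤ (C*)^k a_0`, and
consequently `a_k, x_k, E_k, Σ ‖p_k i‖² → 0` as `k → ∞`. -/
theorem iteratively_decoupled_algorithm_convergence
    {H : Type*} [NormedAddCommGroup H] [InnerProductSpace ℝ H]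
    (N : ℕ) (hN : 1 ≤ N) (α : Fin N → ℝ)
    (m : ℝ) (hm : m = ∑ i : Fin N, (α i) ^ 2) (hm_pos : 0 < m)
    (δ lam μ : ℝ) (hδ : 0 < δ) (hlam : 0 < lam) (hμ : 0 < μ)
    (Cstar : ℝ) (hC : Cstar = m / (lam * δ + m))
    (a E : ℕ → ℝ) (ha : ∀ k, 0 ≤ a k) (hE : ∀ k, 0 ≤ E k)
    (p : ℕ → Fin N → H)
    (x : ℕ → ℝ) (hx : ∀ k, x k = ‖∑ i : Fin N, α i • p k i‖)
    (H1 : ∀ k, 1 ≤ k →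
      δ * (∑ i : Fin N, ‖p k i‖ ^ 2) + (x k) ^ 2 / lam ≤ (a (k - 1) / lam) * x k)
    (H2 : ∀ k, 1 ≤ k →
      2 * μ * (E k) ^ 2 + (a k) ^ 2 / lam ≤ (x k / lam) * a k) :
    (0 < Cstar ∧ Cstar < 1) ∧
    (∀ k, 1 ≤ k → a k ≤ x k ∧ x k ≤ Cstar * a (k - 1)) ∧
    (∀ k, 1 ≤ k → a k ≤ Cstar ^ k * a 0) ∧
    Tendsto a atTop (𝓝 0) ∧
    Tendsto x atTop (𝓝 0) ∧
    Tendsto E atTop (𝓝 0) ∧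
    Tendsto (fun k => ∑ i : Fin N, ‖p k i‖ ^ 2) atTop (𝓝 0) := by
  have hden : 0 < lam * δ + m := by positivity
  have hC0 : 0 < Cstar := by rw [hC]; positivity
  have hC1 : Cstar < 1 := by
    rw [hC, div_lt_one hden]; nlinarith
  have hxnn : ∀ k, 0 ≤ x k := fun k => by rw [hx]; positivity
  have hSnn : ∀ k, 0 ≤ ∑ i : Fin N, ‖p k i‖ ^ 2 := fun k => by positivity
  -- denominator-free versions of H1 and H2
  have H2' : ∀ k, 1 ≤ k →
      2 * μ * (E k) ^ 2 * lam ≤ x k * a k - (a k) ^ 2 := by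
    intro k hk
    have h := H2 k hk
    have hr : x k / lam * a k = (x k * a k) / lam := by ring
    rw [hr] at h
    have h2 : 2 * μ * (E k) ^ 2 ≤ (x k * a k - (a k) ^ 2) / lam := by
      rw [sub_div]; linarith
    exact (le_div_iff₀ hlam).mp h2
  have H1' : ∀ k, 1 ≤ k →
      δ * (∑ i : Fin N, ‖p k i‖ ^ 2) * lam ≤ a (k - 1) * x k - (x k) ^ 2 := by
    intro k hk
    have h := H1 k hk
    have hr : a (k - 1) / lam * x k = (a (k - 1) * x k) / lam := by ring
    rw [hr] at h
    have h2 : δ * (∑ i : Fin N, ‖p k i‖ ^ 2) ≤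
        (a (k - 1) * x k - (x k) ^ 2) / lam := by
      rw [sub_div]; linarith
    exact (le_div_iff₀ hlam).mp h2
  -- Cauchy–Schwarz: x k ^ 2 ≤ m * S k
  have hCS : ∀ k, (x k) ^ 2 ≤ m * ∑ i : Fin N, ‖p k i‖ ^ 2 := by
    intro k
    have h1 : x k ≤ ∑ i : Fin N, |α i| * ‖p k i‖ := by
      rw [hx]
      refine le_trans (norm_sum_le _ _) (le_of_eq ?_)
      refine Finset.sum_congr rfl fun i _ => ?_
      rw [norm_smul, Real.norm_eq_abs]
    have h2 : (∑ i : Fin N, |α i| * ‖p k i‖) ^ 2 ≤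
        (∑ i : Fin N, |α i| ^ 2) * ∑ i : Fin N, ‖p k i‖ ^ 2 :=
      Finset.sum_mul_sq_le_sq_mul_sq _ _ _
    have h3 : (∑ i : Fin N, |α i| ^ 2) = m := by
      rw [hm]; exact Finset.sum_congr rfl fun i _ => sq_abs _
    calc (x k) ^ 2 ≤ (∑ i : Fin N, |α i| * ‖p k i‖) ^ 2 :=
          pow_le_pow_left₀ (hxnn k) h1 2
      _ ≤ m * ∑ i : Fin N, ‖p k i‖ ^ 2 := by rw [← h3]; exact h2
  -- main inequalities
  have key : ∀ k, 1 ≤ k → a k ≤ x k ∧ x k ≤ Cstar * a (k - 1) := by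
    intro k hk
    constructor
    · have h2 := H2' k hk
      have hE2 : 0 ≤ 2 * μ * (E k) ^ 2 * lam := by positivity
      rcases (ha k).eq_or_lt with h | h
      · rw [← h]; exact hxnn k
      · nlinarith
    · have h1 := H1' k hk
      have hcs := hCS k
      rcases (hxnn k).eq_or_lt with h | h
      · rw [← h]; exact mul_nonneg hC0.le (ha _)
      · rw [hC, div_mul_eq_mul_div, le_div_iff₀ hden]
        have hδl : (0:ℝ) ≤ δ * lam := by positivity
        -- δ lam x² ≤ δ lam m S ≤ m (a' x - x²)
        have h6 : δ * lam * (x k) ^ 2 + m * (x k) ^ 2 ≤ m * (a (k-1) * x k) := by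
          nlinarith [mul_le_mul_of_nonneg_left hcs hδl,
            mul_le_mul_of_nonneg_left h1 (le_of_lt hm_pos)]
        nlinarith [h6, h]
  have geo : ∀ k, 1 ≤ k → a k ≤ Cstar ^ k * a 0 := by
    intro k hk
    induction k with
    | zero => omega
    | succ n ih =>
      have h := key (n+1) (by omega)
      have hstep : a (n+1) ≤ Cstar * a n := by
        have := h.1.trans h.2
        simpa using this
      rcases Nat.eq_zero_or_pos n with h0 | h0
      · subst h0; simpa [pow_succ] using hstep
      · have := ih h0
        calc a (n+1) ≤ Cstar * a n := hstep
          _ ≤ Cstar * (Cstar ^ n * a 0) := by nlinarith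
          _ = Cstar ^ (n+1) * a 0 := by ring
  have hpow : Tendsto (fun k => Cstar ^ k * a 0) atTop (𝓝 0) := by
    have := (tendsto_pow_atTop_nhds_zero_of_lt_one (le_of_lt hC0) hC1).mul_const (a 0)
    simpa using this
  have hta : Tendsto a atTop (𝓝 0) := by
    refine tendsto_of_tendsto_of_tendsto_of_le_of_le' tendsto_const_nhds hpow ?_ ?_
    · exact Eventually.of_forall ha
    · filter_upwards [eventually_ge_atTop 1] with k hk using geo k hk
  have hta' : Tendsto (fun k => a (k - 1)) atTop (𝓝 0) :=
    hta.comp (tendsto_sub_atTop_nat 1)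
  have htx : Tendsto x atTop (𝓝 0) := by
    refine tendsto_of_tendsto_of_tendsto_of_le_of_le' tendsto_const_nhds
      (by simpa using hta'.const_mul Cstar) ?_ ?_
    · exact Eventually.of_forall hxnn
    · filter_upwards [eventually_ge_atTop 1] with k hk using (key k hk).2
  have hxa : Tendsto (fun k => x k * a k / (2 * μ * lam)) atTop (𝓝 0) := by
    simpa using (htx.mul hta).div_const (2 * μ * lam)
  have htE2 : Tendsto (fun k => (E k) ^ 2) atTop (𝓝 0) := by
    refine tendsto_of_tendsto_of_tendsto_of_le_of_le' tendsto_const_nhds hxa ?_ ?_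
    · exact Eventually.of_forall fun k => sq_nonneg _
    · filter_upwards [eventually_ge_atTop 1] with k hk
      have h2 := H2' k hk
      rw [le_div_iff₀ (by positivity : (0:ℝ) < 2 * μ * lam)]
      nlinarith [sq_nonneg (a k)]
  have htE : Tendsto E atTop (𝓝 0) := by
    have hs := (Real.continuous_sqrt.tendsto 0).comp htE2
    simp only [Real.sqrt_zero] at hs
    refine hs.congr fun k => ?_
    simp [Function.comp, Real.sqrt_sq (hE k)]
  have htS : Tendsto (fun k => ∑ i : Fin N, ‖p k i‖ ^ 2) atTop (𝓝 0) := by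
    have hb : Tendsto (fun k => a (k - 1) * x k / (δ * lam)) atTop (𝓝 0) := by
      simpa using (hta'.mul htx).div_const (δ * lam)
    refine tendsto_of_tendsto_of_tendsto_of_le_of_le' tendsto_const_nhds hb ?_ ?_
    · exact Eventually.of_forall hSnn
    · filter_upwards [eventually_ge_atTop 1] with k hk
      have h1 := H1' k hk
      rw [le_div_iff₀ (by positivity : (0:ℝ) < δ * lam)]
      nlinarith [sq_nonneg (x k)]
  exact ⟨⟨hC0, hC1⟩, key, geo, hta, htx, htE, htS⟩
end

section
/- Let λ > 0, μ > 0, C > 0, and let a : ℕ → ℝ and b : ℕ → ℝ be sequences of nonnegative reals such that for every k ≥ 1: (i) 2μ · b_k² + a_k²/λ ≤ (a_{k−1} · a_k)/λ, and (ii) a_k ≤ C · b_k. Then a_k → 0 and b_k → 0 as k → ∞. (In particular, (i) alone implies that the sequence (a_k) is nonincreasing.) -/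
open Filter Topology

/-- Abstract content of Remark 4.1 of the paper (degenerate case
`min_i c_i = 0`): if nonnegative sequences `a`, `b` satisfy
`2μ b_k² + a_k²/λ ≤ (a_{k−1} a_k)/λ` and `a_k ≤ C b_k` for all `k ≥ 1`,
then `a_k → 0` and `b_k → 0`; in particular `(a_k)` is nonincreasing. -/
theorem degenerate_storage_convergence
    (lam μ C : ℝ) (hlam : 0 < lam) (hμ : 0 < μ) (hC : 0 < C)
    (a b : ℕ → ℝ) (ha : ∀ k, 0 ≤ a k) (hb : ∀ k, 0 ≤ b k)
    (h1 : ∀ k, 1 ≤ k →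
      2 * μ * (b k) ^ 2 + (a k) ^ 2 / lam ≤ (a (k - 1) * a k) / lam)
    (h2 : ∀ k, 1 ≤ k → a k ≤ C * b k) :
    Tendsto a atTop (𝓝 0) ∧ Tendsto b atTop (𝓝 0) ∧
      (∀ k, 1 ≤ k → a k ≤ a (k - 1)) := by
  set q : ℝ := 1 + 2 * μ * lam / C ^ 2 with hq
  have hq1 : 1 < q := by
    have h : 0 < 2 * μ * lam / C ^ 2 := by positivity
    rw [hq]; linarith
  have hq0 : 0 < q := by linarith
  -- key contraction: q * a k ≤ a (k-1)
  have key : ∀ k, 1 ≤ k → q * a k ≤ a (k - 1) := by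
    intro k hk
    have H1 := h1 k hk
    have H2 := h2 k hk
    have hak := ha k
    have hbk := hb k
    have hsq : a k ^ 2 ≤ C ^ 2 * b k ^ 2 := by nlinarith
    have hqa : q * a k ^ 2 ≤ a (k - 1) * a k := by
      have h' : 2 * μ * b k ^ 2 * lam + a k ^ 2 ≤ a (k - 1) * a k := by
        have := mul_le_mul_of_nonneg_right H1 (le_of_lt hlam)
        field_simp at this
        nlinarith
      have : 2 * μ * lam / C ^ 2 * a k ^ 2 ≤ 2 * μ * b k ^ 2 * lam := by
        rw [div_mul_eq_mul_div, div_le_iff₀ (by positivity)]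
        nlinarith [mul_le_mul_of_nonneg_left hsq (by positivity : (0:ℝ) ≤ 2 * μ * lam)]
      rw [hq]; nlinarith [this, h']
    rcases eq_or_lt_of_le hak with h0 | h0
    · simp [← h0]; exact ha _
    · have := mul_le_mul_of_nonneg_right hqa (le_of_lt (inv_pos.mpr h0))
      calc q * a k = q * a k ^ 2 * (a k)⁻¹ := by field_simp
        _ ≤ a (k - 1) * a k * (a k)⁻¹ := this
        _ = a (k - 1) := by field_simp
  have mono : ∀ k, 1 ≤ k → a k ≤ a (k - 1) := by
    intro k hk
    have := key k hk
    nlinarith [ha k]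
  -- geometric decay
  have geo : ∀ k, a k ≤ a 0 * (1 / q) ^ k := by
    intro k
    induction k with
    | zero => simp
    | succ n ih =>
      have hk : q * a (n + 1) ≤ a n := by
        simpa using key (n + 1) (Nat.le_add_left 1 n)
      have : a (n + 1) ≤ a n / q := by
        rw [le_div_iff₀ hq0]; linarith
      calc a (n + 1) ≤ a n / q := this
        _ ≤ a 0 * (1 / q) ^ n / q := by
            apply div_le_div_of_nonneg_right ih hq0.le
        _ = a 0 * (1 / q) ^ (n + 1) := by
            rw [pow_succ, ← mul_assoc, mul_one_div]
  have hr : |1 / q| < 1 := by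
    rw [abs_of_pos (by positivity)]
    rw [div_lt_one hq0]; linarith
  have hga : Tendsto (fun k => a 0 * (1 / q) ^ k) atTop (𝓝 0) := by
    have := tendsto_pow_atTop_nhds_zero_of_abs_lt_one hr
    simpa using this.const_mul (a 0)
  have hta : Tendsto a atTop (𝓝 0) := squeeze_zero ha geo hga
  -- b bound
  have hbbd : ∀ k, 1 ≤ k → b k ≤ Real.sqrt (1 / (2 * μ * lam)) * a (k - 1) := by
    intro k hk
    have H1 := h1 k hk
    have hmono := mono k hk
    have hb2 : b k ^ 2 ≤ 1 / (2 * μ * lam) * a (k - 1) ^ 2 := by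
      have h' : 2 * μ * b k ^ 2 * lam ≤ a (k - 1) * a k - a k ^ 2 := by
        have := mul_le_mul_of_nonneg_right H1 (le_of_lt hlam)
        field_simp at this
        nlinarith
      have haa : a (k - 1) * a k - a k ^ 2 ≤ a (k - 1) ^ 2 := by
        nlinarith [ha k, ha (k - 1)]
      rw [div_mul_eq_mul_div, le_div_iff₀ (by positivity)]
      nlinarith
    calc b k = Real.sqrt (b k ^ 2) := (Real.sqrt_sq (hb k)).symm
      _ ≤ Real.sqrt (1 / (2 * μ * lam) * a (k - 1) ^ 2) := Real.sqrt_le_sqrt hb2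
      _ = Real.sqrt (1 / (2 * μ * lam)) * a (k - 1) := by
          rw [Real.sqrt_mul (by positivity), Real.sqrt_sq (ha _)]
  have hgb : Tendsto (fun k => Real.sqrt (1 / (2 * μ * lam)) * a (k - 1)) atTop (𝓝 0) := by
    have h1' : Tendsto (fun k : ℕ => a (k - 1)) atTop (𝓝 0) :=
      hta.comp (tendsto_sub_atTop_nat 1)
    simpa using h1'.const_mul (Real.sqrt (1 / (2 * μ * lam)))
  have htb : Tendsto b atTop (𝓝 0) := by
    apply squeeze_zero' (Eventually.of_forall hb) _ hgb
    filter_upwards [eventually_ge_atTop 1] with k hk using hbbd k hk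
  exact ⟨hta, htb, mono⟩
end
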